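/- Let G be a cobipartite finite simple graph and let F ⊆ V(G) be a positive semidefinite zero forcing set for G. Then, in any forcing sequence from F under the positive semidefinite zero forcing rule, any force that is a standard force is followed only by standard forces; that is, all strictly positive semidefinite forces in the sequence occur before any of the standard forces. -/

import Mathlib

/-!  Common definitions: zero forcing (standard, loop, positive semidefinite),
zero-nonzero patterns, triangles, and related graph parameters. -/

variable {V : Type*}

/-- Standard zero forcing rule: with filled set `S`, the filled vertex `v` can force
its unique unfilled neighbor `u`. -/
def StdForce (G : SimpleGraph V) (S : Set V) (v u : V) : Prop :=
  v ∈ S ∧ u ∉ S ∧ G.Adj v u ∧ ∀ w, G.Adj v w → w ∉ S → w = u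

/-- Adjacency in the looping of `G` with loops at the vertices in `L`
(a vertex counts as its own neighbor iff it has a loop). -/
def LoopAdj (G : SimpleGraph V) (L : Set V) (v w : V) : Prop :=
  G.Adj v w ∨ (v = w ∧ v ∈ L)

/-- Loop zero forcing rule (the forcing vertex need not be filled): `v` can force `u`
if `u` is the only unfilled neighbor of `v` in the looping. -/
def LoopForce (G : SimpleGraph V) (L : Set V) (S : Set V) (v u : V) : Prop :=
  u ∉ S ∧ LoopAdj G L v u ∧ ∀ w, LoopAdj G L v w → w ∉ S → w = u

/-- Positive semidefinite zero forcing rule: the filled vertex `v` can force the unfilled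
vertex `u` if `u` is the only neighbor of `v` in the connected component of `u` of the
subgraph induced by the unfilled vertices. -/
def PsdForce (G : SimpleGraph V) (S : Set V) (v u : V) : Prop :=
  v ∈ S ∧ u ∉ S ∧ G.Adj v u ∧
    ∀ w, G.Adj v w → w ∉ S →
      Relation.ReflTransGen (fun a b => G.Adj a b ∧ a ∉ S ∧ b ∉ S) u w → w = u

/-- The vertices performing a force in a forcing sequence. -/
def sourcesOf (seq : List (V × V)) : Set V := {v | ∃ p ∈ seq, p.1 = v}

/-- The vertices that get forced in a forcing sequence. -/
def targetsOf (seq : List (V × V)) : Set V := {u | ∃ p ∈ seq, p.2 = u}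

/-- The filled set after performing all forces of `seq` starting from `F`. -/
def filledAfter (F : Set V) (seq : List (V × V)) : Set V := F ∪ targetsOf seq

/-- `ValidSeq rule seq F`: starting with `F` as the filled set, the sequence of forces
`seq` is permitted (each force in turn is allowed by `rule`, and each vertex forces
at most once). -/
def ValidSeq (rule : Set V → V → V → Prop) : List (V × V) → Set V → Prop
  | [], _ => True
  | (v, u) :: rest, F => rule F v u ∧ (∀ p ∈ rest, p.1 ≠ v) ∧ ValidSeq rule rest (insert u F)

/-- `F` is a zero forcing set w.r.t. the forcing rule `rule`. -/
def IsZFSet (rule : Set V → V → V → Prop) (F : Set V) : Prop :=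
  ∃ seq : List (V × V), ValidSeq rule seq F ∧ filledAfter F seq = Set.univ

/-- `F` is a zero forcing set (w.r.t. `rule`) from which `R` can be the set of vertices
that force: some (automatically complete) forcing sequence from `F` fills every vertex
and the set of vertices performing a force is exactly `R`. -/
def ForcesWith (rule : Set V → V → V → Prop) (F R : Set V) : Prop :=
  ∃ seq : List (V × V), ValidSeq rule seq F ∧ filledAfter F seq = Set.univ ∧
    sourcesOf seq = R

/-- The zero forcing number w.r.t. a forcing rule. -/
noncomputable def Znum (rule : Set V → V → V → Prop) : ℕ :=
  sInf {n | ∃ F : Set V, IsZFSet rule F ∧ F.ncard = n}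

/-- The (standard) zero forcing number `Z(G)`. -/
noncomputable def Z (G : SimpleGraph V) : ℕ := Znum (StdForce G)

/-- The zero forcing number of the looping of `G` with loops at `L`. -/
noncomputable def Zloop (G : SimpleGraph V) (L : Set V) : ℕ := Znum (LoopForce G L)

/-- The positive semidefinite zero forcing number `Z₊(G)`. -/
noncomputable def Zplus (G : SimpleGraph V) : ℕ := Znum (PsdForce G)

/-- The enhanced zero forcing number `Ẑ(G)`: the maximum over all loopings of `G` of the
zero forcing number of the looping. -/
noncomputable def Zhat (G : SimpleGraph V) : ℕ := sSup {n | ∃ L : Set V, Zloop G L = n}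

/-- `F` is a direct zero forcing set for `G`: some forcing sequence from `F` fills every
vertex and every vertex that performs a force belongs to `F`. -/
def IsDirectZFSet (G : SimpleGraph V) (F : Set V) : Prop :=
  ∃ seq : List (V × V), ValidSeq (StdForce G) seq F ∧ filledAfter F seq = Set.univ ∧
    sourcesOf seq ⊆ F

/-- The direct zero forcing number `Z_d(G)`. -/
noncomputable def Zd (G : SimpleGraph V) : ℕ :=
  sInf {n | ∃ F : Set V, IsDirectZFSet G F ∧ F.ncard = n}

/-- A zero-nonzero pattern `Y` (entry `Y i j` means the `(i,j)` entry is `*`)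
has a `k × k` submatrix that is a triangle. -/
def HasTriOfSize {ρ γ : Type*} (Y : ρ → γ → Prop) (k : ℕ) : Prop :=
  ∃ (r : Fin k → ρ) (c : Fin k → γ), Function.Injective r ∧ Function.Injective c ∧
    (∀ i, Y (r i) (c i)) ∧ ∀ i j : Fin k, i < j → ¬ Y (r i) (c j)

/-- The triangle number `tri(Y)` of a zero-nonzero pattern. -/
noncomputable def tri {ρ γ : Type*} (Y : ρ → γ → Prop) : ℕ := sSup {k | HasTriOfSize Y k}

/-- Membership in `S_znz(G)`: off the diagonal, the pattern matches the adjacency of `G`. -/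
def InSznz (G : SimpleGraph V) (A : V → V → Prop) : Prop :=
  ∀ i j : V, i ≠ j → (A i j ↔ G.Adj i j)

/-- The zero-nonzero pattern of the looping of `G` with loops at `L`. -/
def loopPattern (G : SimpleGraph V) (L : Set V) : V → V → Prop :=
  fun i j => (i = j ∧ i ∈ L) ∨ (i ≠ j ∧ G.Adj i j)

/-- The submatrix of the pattern `Y` with rows `R` and columns `C` is a triangle:
there are enumerations of `R` and `C` realizing a lower-triangular pattern with `*`
diagonal (in particular `|R| = |C|`). -/
def SubIsTriangle {ρ γ : Type*} (Y : ρ → γ → Prop) (R : Finset ρ) (C : Finset γ) : Prop :=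
  ∃ (k : ℕ) (r : Fin k → ρ) (c : Fin k → γ),
    Function.Injective r ∧ Function.Injective c ∧
    (∀ x : ρ, x ∈ R ↔ ∃ i, r i = x) ∧ (∀ y : γ, y ∈ C ↔ ∃ i, c i = y) ∧
    (∀ i, Y (r i) (c i)) ∧ ∀ i j : Fin k, i < j → ¬ Y (r i) (c j)

/-- `(R, C)` is a persistent triangle of `G`. -/
def PersistentTriangle (G : SimpleGraph V) (R C : Finset V) : Prop :=
  ∀ A : V → V → Prop, InSznz G A → SubIsTriangle A R C

/-- `F` is a direct zero forcing set for `G` from which `R` can be the set of vertices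
that force. -/
def DirectForcesWith (G : SimpleGraph V) (F R : Set V) : Prop :=
  ∃ seq : List (V × V), ValidSeq (StdForce G) seq F ∧ filledAfter F seq = Set.univ ∧
    sourcesOf seq = R ∧ R ⊆ F

/-- `(range r, range c)` is a partition of `G` according to the `m × n` pattern `Y`,
with labelings given by `r` and `c`. -/
def PartitionAccording (G : SimpleGraph V) {m n : ℕ} (Y : Fin m → Fin n → Prop)
    (r : Fin m → V) (c : Fin n → V) : Prop :=
  Function.Injective r ∧ Function.Injective c ∧ (∀ i j, r i ≠ c j) ∧
    (∀ v : V, (∃ i, r i = v) ∨ (∃ j, c j = v)) ∧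
    ∀ i j, G.Adj (r i) (c j) ↔ Y i j

/-- `F` is a zero forcing set for `G` that forces from `V1` to `V2`. -/
def ForcesFromTo (G : SimpleGraph V) (F V1 V2 : Set V) : Prop :=
  V1 ⊆ F ∧ ∃ seq : List (V × V), ValidSeq (StdForce G) seq F ∧
    filledAfter F seq = Set.univ ∧ sourcesOf seq ⊆ V1 ∧ targetsOf seq ⊆ V2

/-- `(V1, V2)` is a partition of the vertex set of `G` into two cliques. -/
def IsCliquePartition (G : SimpleGraph V) (V1 V2 : Set V) : Prop :=
  Disjoint V1 V2 ∧ V1 ∪ V2 = Set.univ ∧ G.IsClique V1 ∧ G.IsClique V2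

/-- `G` is cobipartite. -/
def Cobipartite (G : SimpleGraph V) : Prop := ∃ V1 V2 : Set V, IsCliquePartition G V1 V2

/-- `G` is the cobipartite graph associated with the pattern `Y`, via labelings `r`, `c`. -/
def CobipAssociated (G : SimpleGraph V) {m n : ℕ} (Y : Fin m → Fin n → Prop)
    (r : Fin m → V) (c : Fin n → V) : Prop :=
  PartitionAccording G Y r c ∧ G.IsClique (Set.range r) ∧ G.IsClique (Set.range c)

/-- `z` is a critical vertex: some optimal forcing sequence neither lets `z` force
nor forces `z`. -/
def Critical (G : SimpleGraph V) (z : V) : Prop :=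
  ∃ (F : Set V) (seq : List (V × V)), F.ncard = Z G ∧ ValidSeq (StdForce G) seq F ∧
    filledAfter F seq = Set.univ ∧ z ∉ sourcesOf seq ∧ z ∉ targetsOf seq

/-- `z` is an uncritical vertex: in every optimal forcing sequence, exactly one of the
following holds: `z` performs a force, or `z` gets forced. -/
def Uncritical (G : SimpleGraph V) (z : V) : Prop :=
  ∀ (F : Set V) (seq : List (V × V)), F.ncard = Z G → ValidSeq (StdForce G) seq F →
    filledAfter F seq = Set.univ → (z ∈ sourcesOf seq ↔ z ∉ targetsOf seq)

/-- The maximum nullity `M(G)` over the field `𝔽`. -/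
noncomputable def Mnum (𝔽 : Type*) [Field 𝔽] [Fintype V] [DecidableEq V]
    (G : SimpleGraph V) : ℕ :=
  sSup {k | ∃ A : Matrix V V 𝔽, A.IsSymm ∧ (∀ i j : V, i ≠ j → (A i j ≠ 0 ↔ G.Adj i j)) ∧
    k = Fintype.card V - A.rank}

/-- The minimum rank `mr_𝔽(Y)` of a zero-nonzero pattern over the field `𝔽`. -/
noncomputable def mr (𝔽 : Type*) [Field 𝔽] {m n : ℕ} (Y : Fin m → Fin n → Prop) : ℕ :=
  sInf {k | ∃ A : Matrix (Fin m) (Fin n) 𝔽, (∀ i j, A i j ≠ 0 ↔ Y i j) ∧ A.rank = k}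

/-- `G` is a `k`-tree: there is a construction ordering of the vertices in which the
first `k+1` vertices form a clique and every later vertex is adjacent among the earlier
vertices to exactly a `k`-clique. -/
def IsKTree (k : ℕ) [Fintype V] (G : SimpleGraph V) : Prop :=
  k + 1 ≤ Fintype.card V ∧ ∃ ord : V ≃ Fin (Fintype.card V),
    (∀ u v : V, (ord u : ℕ) < k + 1 → (ord v : ℕ) < k + 1 → u ≠ v → G.Adj u v) ∧
    ∀ v : V, k + 1 ≤ (ord v : ℕ) →
      G.IsClique {u : V | (ord u : ℕ) < (ord v : ℕ) ∧ G.Adj u v} ∧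
      {u : V | (ord u : ℕ) < (ord v : ℕ) ∧ G.Adj u v}.ncard = k

lemma filledAfter_cons {V : Type*} (F : Set V) (v u : V) (l : List (V × V)) :
    filledAfter F ((v, u) :: l) = filledAfter (insert u F) l := by
  ext x
  simp only [filledAfter, targetsOf, Set.mem_union, Set.mem_setOf_eq, List.mem_cons,
    Set.mem_insert_iff]
  constructor
  · rintro (hx | ⟨p, hp | hp, rfl⟩)
    · exact Or.inl (Or.inr hx)
    · exact Or.inl (Or.inl (by rw [hp]))
    · exact Or.inr ⟨p, hp, rfl⟩
  · rintro ((rfl | hx) | ⟨p, hp, rfl⟩)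
    · exact Or.inr ⟨(v, x), Or.inl rfl, rfl⟩
    · exact Or.inl hx
    · exact Or.inr ⟨p, Or.inr hp, rfl⟩

lemma validSeq_get {V : Type*} {rule : Set V → V → V → Prop} :
    ∀ (seq : List (V × V)) (F : Set V), ValidSeq rule seq F →
      ∀ j : Fin seq.length,
        rule (filledAfter F (seq.take (j : ℕ))) (seq.get j).1 (seq.get j).2
  | [], _, _, j => j.elim0
  | (v, u) :: rest, F, h, j => by
    obtain ⟨h1, _, h3⟩ := h
    cases j using Fin.cases with
    | zero =>
        have hnil : filledAfter F ([] : List (V × V)) = F := by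
          simp [filledAfter, targetsOf]
        simpa [hnil] using h1
    | succ j =>
        have IH := validSeq_get rest (insert u F) h3 j
        simpa [List.take_succ_cons, filledAfter_cons] using IH

lemma targetsOf_mono {V : Type*} {l₁ l₂ : List (V × V)} (h : l₁ <+: l₂) :
    targetsOf l₁ ⊆ targetsOf l₂ := by
  rintro x ⟨p, hp, rfl⟩
  exact ⟨p, h.subset hp, rfl⟩

lemma filledAfter_take_mono {V : Type*} (F : Set V) (seq : List (V × V)) {i j : ℕ}
    (h : i ≤ j) : filledAfter F (seq.take i) ⊆ filledAfter F (seq.take j) := by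
  apply Set.union_subset_union_right
  exact targetsOf_mono (List.take_prefix_take_left h)

lemma get_mem_filledAfter_take {V : Type*} (F : Set V) (seq : List (V × V))
    (i : Fin seq.length) : (seq.get i).2 ∈ filledAfter F (seq.take ((i : ℕ) + 1)) := by
  refine Or.inr ⟨seq.get i, ?_, rfl⟩
  rw [← List.take_concat_get i.isLt, List.concat_eq_append]
  exact List.mem_append_right _ (List.mem_singleton.2 rfl)

lemma psd_to_std {V : Type*} {G : SimpleGraph V} {S W : Set V}
    (hW : G.IsClique W) (hsub : Sᶜ ⊆ W) {v u : V} (h : PsdForce G S v u) :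
    StdForce G S v u := by
  obtain ⟨hv, hu, hadj, hf⟩ := h
  refine ⟨hv, hu, hadj, fun w hw hwS => ?_⟩
  by_cases hwu : w = u
  · exact hwu
  · have hadj' : G.Adj u w := hW (hsub hu) (hsub hwS) (fun e => hwu e.symm)
    exact hf w hw hwS (Relation.ReflTransGen.single ⟨hadj', hu, hwS⟩)

/-- In a cobipartite graph, in any positive semidefinite forcing
sequence from a positive semidefinite zero forcing set, every force occurring after a
standard force is itself a standard force. -/
theorem psd_standard_forces_last
    {V : Type*} [Fintype V] [DecidableEq V] (G : SimpleGraph V) (hco : Cobipartite G)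
    (F : Set V) (hF : IsZFSet (PsdForce G) F)
    (seq : List (V × V)) (hval : ValidSeq (PsdForce G) seq F)
    (i j : Fin seq.length) (hij : i < j)
    (hstd : StdForce G (filledAfter F (seq.take (i : ℕ))) (seq.get i).1 (seq.get i).2) :
    StdForce G (filledAfter F (seq.take (j : ℕ))) (seq.get j).1 (seq.get j).2 := by
  obtain ⟨V1, V2, hdisj, huniv, hc1, hc2⟩ := hco
  have hpsd_j := validSeq_get seq F hval j
  set Si := filledAfter F (seq.take (i : ℕ)) with hSi
  set Sj := filledAfter F (seq.take (j : ℕ)) with hSj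
  obtain ⟨hv, hu, hadj, hforce⟩ := hstd
  set v := (seq.get i).1
  set u := (seq.get i).2
  have hmono : filledAfter F (seq.take ((i : ℕ) + 1)) ⊆ Sj :=
    filledAfter_take_mono F seq hij
  have huSj : u ∈ Sj := hmono (get_mem_filledAfter_take F seq i)
  have hSiSj : Si ⊆ Sj :=
    filledAfter_take_mono F seq (le_of_lt (lt_of_lt_of_le (Nat.lt_succ_self _) hij))
  -- key: if v ∈ W (a clique of the partition), then Sjᶜ is contained in the other part
  have key : ∀ W W' : Set V, G.IsClique W → W ∪ W' = Set.univ → v ∈ W →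
      Sjᶜ ⊆ W' := by
    intro W W' hW hWU hvW w hw
    have hwSj : w ∉ Sj := hw
    have hwSi : w ∉ Si := fun h => hwSj (hSiSj h)
    have hwu : w ≠ u := fun e => hwSj (e ▸ huSj)
    have : w ∈ W ∪ W' := by rw [hWU]; exact Set.mem_univ w
    rcases this with hwW | hwW'
    · have hwv : w ≠ v := fun e => hwSi (e ▸ hv)
      have : G.Adj v w := hW hvW hwW (fun e => hwv e.symm)
      exact absurd (hforce w this hwSi) hwu
    · exact hwW'
  have hvmem : v ∈ V1 ∪ V2 := by rw [huniv]; exact Set.mem_univ v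
  rcases hvmem with hv1 | hv2
  · exact psd_to_std hc2 (key V1 V2 hc1 huniv hv1) hpsd_j
  · exact psd_to_std hc1 (key V2 V1 hc2 (by rw [Set.union_comm]; exact huniv) hv2) hpsd_j
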